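/- For every Borel probability measure μ on [0,1], every Borel measurable function g : [0,1] × ℝ → ℝ, and every ε > 0, there exists a 1-Lipschitz function f : [0,1] → ℝ such that ∫₀¹ |g(x, f(x)) − ∫₀¹ f(t) dt| dμ(x) ≥ 1 − √3/2 − ε, where the integral with respect to μ is the lower Lebesgue integral of the nonnegative integrand. (That is, even allowing arbitrary post-processing of the observed sample, no randomized single-sample algorithm achieves worst-case expected error below 1 − √3/2.) -/

import Mathlib

open MeasureTheory Set
open scoped ENNReal

set_option maxHeartbeats 1000000


lemma integral_abs_sub (a : ℝ) (h0 : 0 ≤ a) (h1 : a ≤ 1) :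
    ∫ t in (0:ℝ)..1, |t - a| = a^2 - a + 1/2 := by
  have hint : ∀ u v : ℝ, IntervalIntegrable (fun t => |t - a|) volume u v :=
    fun u v => ((continuous_id.sub continuous_const).abs).intervalIntegrable u v
  rw [← intervalIntegral.integral_add_adjacent_intervals (hint 0 a) (hint a 1)]
  have e1 : ∫ t in (0:ℝ)..a, |t - a| = ∫ t in (0:ℝ)..a, (a - t) := by
    apply intervalIntegral.integral_congr
    intro t ht
    rw [uIcc_of_le h0] at ht
    show |t - a| = a - t
    rw [abs_of_nonpos (by linarith [ht.2])]
    ring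
  have e2 : ∫ t in a..(1:ℝ), |t - a| = ∫ t in a..(1:ℝ), (t - a) := by
    apply intervalIntegral.integral_congr
    intro t ht
    rw [uIcc_of_le h1] at ht
    show |t - a| = t - a
    rw [abs_of_nonneg (by linarith [ht.1])]
  rw [e1, e2,
    intervalIntegral.integral_sub (intervalIntegrable_const) intervalIntegral.intervalIntegrable_id,
    intervalIntegral.integral_sub intervalIntegral.intervalIntegrable_id (intervalIntegrable_const)]
  simp [integral_id]
  ring

lemma avg_shape (s b a : ℝ) (h0 : 0 ≤ a) (h1 : a ≤ 1) :
    ∫ t in (0:ℝ)..1, (s * |t - a| + b) = s * (a^2 - a + 1/2) + b := by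
  have hint : IntervalIntegrable (fun t => s * |t - a|) volume 0 1 :=
    (continuous_const.mul ((continuous_id.sub continuous_const).abs)).intervalIntegrable 0 1
  rw [intervalIntegral.integral_add hint intervalIntegrable_const,
    intervalIntegral.integral_const_mul, integral_abs_sub a h0 h1]
  simp

lemma key_ineq (c u H : ℝ) (hc : 0 ≤ c) :
    2 * c ≤ |H + (|u| - c)| + |H - (|u| - c)| + (|H + (|u - c| - c)| + |H - (|u - c| - c)|) := by
  have pair : ∀ t : ℝ, 2 * |t| ≤ |H + t| + |H - t| := by
    intro t
    have h1 := abs_add_le (H + t) (t - H)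
    have h2 : |H + t + (t - H)| = 2 * |t| := by
      rw [show H + t + (t - H) = 2 * t by ring, abs_mul]
      norm_num
    have h3 : |t - H| = |H - t| := abs_sub_comm t H
    linarith
  have hsum : c ≤ |(|u| - c)| + |(|u - c| - c)| := by
    rcases le_total u 0 with h | h
    · have h1 : |u| = -u := abs_of_nonpos h
      have h2 : |u - c| = c - u := by rw [abs_of_nonpos (by linarith)]; ring
      have h3 : u + c ≤ |(|u| - c)| := by
        rw [h1, show -u - c = -(u + c) by ring, abs_neg]
        exact le_abs_self _
      have h4 : |(|u - c| - c)| = -u := by rw [h2]; rw [show c - u - c = -u by ring]; exact abs_of_nonneg (by linarith)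
      linarith
    · rcases le_total u c with h' | h'
      · have h1 : |u| = u := abs_of_nonneg h
        have h2 : |u - c| = c - u := by rw [abs_of_nonpos (by linarith)]; ring
        have h3 : |(|u| - c)| = c - u := by rw [h1, abs_of_nonpos (by linarith)]; ring
        have h4 : |(|u - c| - c)| = u := by rw [h2, show c - u - c = -u by ring, abs_neg]; exact abs_of_nonneg h
        linarith
      · have h1 : |u| = u := abs_of_nonneg (by linarith)
        have h2 : |u - c| = u - c := abs_of_nonneg (by linarith)
        have h3 : |(|u| - c)| = u - c := by rw [h1]; exact abs_of_nonneg (by linarith)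
        have h4 : 2 * c - u ≤ |(|u - c| - c)| := by
          rw [h2]
          have := neg_abs_le (u - c - c)
          linarith [neg_le_abs (u - c - c)]
        linarith
  have p1 := pair (|u| - c)
  have p2 := pair (|u - c| - c)
  linarith

lemma lintegral_Ioo_translate (F : ℝ → ℝ≥0∞) (t M : ℝ) :
    ∫⁻ b in Ioo (-M) M, F (t + b) = ∫⁻ w in Ioo (t - M) (t + M), F w := by
  have h1 : ∫⁻ b in Ioo (-M) M, F (t + b)
      = ∫⁻ b, (Ioo (t - M) (t + M)).indicator F (t + b) := by
    rw [← lintegral_indicator measurableSet_Ioo]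
    congr 1
    funext b
    by_cases hb : b ∈ Ioo (-M) M
    · rw [mem_Ioo] at hb
      rw [indicator_of_mem (mem_Ioo.mpr hb),
        indicator_of_mem (mem_Ioo.mpr ⟨by linarith [hb.1], by linarith [hb.2]⟩)]
    · rw [indicator_of_notMem hb, indicator_of_notMem]
      intro hmem
      rw [mem_Ioo] at hmem
      exact hb (mem_Ioo.mpr ⟨by linarith [hmem.1], by linarith [hmem.2]⟩)
  rw [h1, lintegral_add_left_eq_self ((Ioo (t - M) (t + M)).indicator F) t,
    lintegral_indicator measurableSet_Ioo]

/-- Even allowing arbitrary measurable post-processing of the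
observed sample, no randomized single-sample algorithm on [0,1] achieves
worst-case expected error below 1 − √3/2 (the error is measured via the lower
Lebesgue integral of the nonnegative integrand). -/
theorem stmt_8 (μ : Measure ℝ) [IsProbabilityMeasure μ]
    (hμ : μ (Set.Icc (0 : ℝ) 1) = 1)
    (g : ℝ × ℝ → ℝ) (hg : Measurable g)
    (ε : ℝ) (hε : 0 < ε) :
    ∃ f : ℝ → ℝ,
      (∀ x ∈ Set.Icc (0 : ℝ) 1, ∀ y ∈ Set.Icc (0 : ℝ) 1, |f x - f y| ≤ |x - y|) ∧
      ENNReal.ofReal (1 - Real.sqrt 3 / 2 - ε) ≤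
        ∫⁻ x in Set.Icc (0 : ℝ) 1,
          ENNReal.ofReal |g (x, f x) - ∫ t in (0 : ℝ)..1, f t| ∂μ := by
  by_cases hpos : 1 - Real.sqrt 3 / 2 - ε ≤ 0
  · refine ⟨fun _ => 0, fun x _ y _ => by simp, ?_⟩
    rw [ENNReal.ofReal_eq_zero.mpr hpos]
    exact zero_le
  push_neg at hpos
  by_contra hcon
  push_neg at hcon
  have h3 : Real.sqrt 3 ^ 2 = 3 := Real.sq_sqrt (by norm_num)
  have h3nn : (0:ℝ) ≤ Real.sqrt 3 := Real.sqrt_nonneg 3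
  have h3one : (1:ℝ) ≤ Real.sqrt 3 := by nlinarith
  have h3two : Real.sqrt 3 ≤ 2 := by nlinarith
  set c : ℝ := 2 - Real.sqrt 3 with hc_def
  set a : ℝ := (Real.sqrt 3 - 1) / 2 with ha_def
  have hc0 : 0 ≤ c := by rw [hc_def]; linarith
  have hc1 : c ≤ 1 := by rw [hc_def]; linarith
  have ha0 : 0 ≤ a := by rw [ha_def]; linarith
  have ha1 : a ≤ 1 := by rw [ha_def]; linarith
  have havg1 : a ^ 2 - a + 1 / 2 = c := by rw [ha_def, hc_def]; nlinarith
  have havg2 : (1 - a) ^ 2 - (1 - a) + 1 / 2 = c := by rw [ha_def, hc_def]; nlinarith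
  have hgap : (1:ℝ) - a = a + c := by rw [ha_def, hc_def]; ring
  have hc2 : (1:ℝ) - Real.sqrt 3 / 2 - ε = c / 2 - ε := by rw [hc_def]; ring
  set M : ℝ := 1 + 1 / ε with hM_def
  have hM1 : (1:ℝ) ≤ M := by
    have := one_div_pos.mpr hε
    rw [hM_def]; linarith
  -- the per-function error bound from the contradiction hypothesis
  have herr : ∀ s aa b : ℝ, (s = 1 ∨ s = -1) → (aa = a ∨ aa = 1 - a) →
      (∫⁻ x in Set.Icc (0:ℝ) 1,
        ENNReal.ofReal |g (x, s * |x - aa| + b) - (s * c + b)| ∂μ)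
      ≤ ENNReal.ofReal (1 - Real.sqrt 3 / 2 - ε) := by
    intro s aa b hs haa
    have haa0 : 0 ≤ aa := by rcases haa with rfl | rfl <;> linarith
    have haa1 : aa ≤ 1 := by rcases haa with rfl | rfl <;> linarith
    have hs1 : |s| = 1 := by rcases hs with rfl | rfl <;> simp
    have hlip : ∀ x ∈ Set.Icc (0:ℝ) 1, ∀ y ∈ Set.Icc (0:ℝ) 1,
        |(fun t => s * |t - aa| + b) x - (fun t => s * |t - aa| + b) y| ≤ |x - y| := by
      intro x _ y _
      have e : (s * |x - aa| + b) - (s * |y - aa| + b) = s * (|x - aa| - |y - aa|) := by ring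
      simp only []
      rw [e, abs_mul, hs1, one_mul]
      have h := abs_abs_sub_abs_le_abs_sub (x - aa) (y - aa)
      have e2 : (x - aa) - (y - aa) = x - y := by ring
      rw [e2] at h
      exact h
    have havg : ∫ t in (0:ℝ)..1, (s * |t - aa| + b) = s * c + b := by
      rw [avg_shape s b aa haa0 haa1]
      rcases haa with rfl | rfl
      · rw [havg1]
      · rw [havg2]
    have hc' := hcon (fun t => s * |t - aa| + b) hlip
    rw [havg] at hc'
    exact le_of_lt hc'
  -- joint measurability
  have hjm : ∀ s aa : ℝ, Measurable fun p : ℝ × ℝ =>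
      ENNReal.ofReal |g (p.1, s * |p.1 - aa| + p.2) - (s * c + p.2)| := by
    intro s aa
    apply Measurable.ennreal_ofReal
    apply Measurable.abs
    exact (hg.comp (measurable_fst.prodMk
      (((measurable_fst.sub measurable_const).abs.const_mul s).add measurable_snd))).sub
      (measurable_snd.const_add (s * c))
  -- swap of integrals (Tonelli)
  have hswap : ∀ s aa : ℝ,
      (∫⁻ x in Set.Icc (0:ℝ) 1, ∫⁻ b in Ioo (-M) M,
        ENNReal.ofReal |g (x, s * |x - aa| + b) - (s * c + b)| ∂volume ∂μ)
      = ∫⁻ b in Ioo (-M) M, ∫⁻ x in Set.Icc (0:ℝ) 1,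
        ENNReal.ofReal |g (x, s * |x - aa| + b) - (s * c + b)| ∂μ ∂volume := by
    intro s aa
    exact lintegral_lintegral_swap ((hjm s aa).aemeasurable)
  -- measurability of inner integrals in x
  have hIm : ∀ s aa : ℝ, Measurable fun x : ℝ => ∫⁻ b in Ioo (-M) M,
      ENNReal.ofReal |g (x, s * |x - aa| + b) - (s * c + b)| ∂volume := by
    intro s aa
    exact Measurable.lintegral_prod_right' (hjm s aa)
  -- pointwise (in x) lower bound on the sum of the four inner integrals
  have hinner : ∀ x ∈ Set.Icc (0:ℝ) 1,
      ENNReal.ofReal (2*c) * ENNReal.ofReal (2*(M-1)) ≤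
      (∫⁻ b in Ioo (-M) M, ENNReal.ofReal |g (x, 1 * |x - a| + b) - (1 * c + b)| ∂volume) +
      (∫⁻ b in Ioo (-M) M, ENNReal.ofReal |g (x, (-1) * |x - a| + b) - ((-1) * c + b)| ∂volume) +
      ((∫⁻ b in Ioo (-M) M, ENNReal.ofReal |g (x, 1 * |x - (1-a)| + b) - (1 * c + b)| ∂volume) +
       (∫⁻ b in Ioo (-M) M, ENNReal.ofReal |g (x, (-1) * |x - (1-a)| + b) - ((-1) * c + b)| ∂volume)) := by
    intro x hx
    have hxm := hx
    rw [mem_Icc] at hxm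
    -- measurability of the w-integrands
    have hFm : ∀ k : ℝ, Measurable fun w : ℝ => ENNReal.ofReal |g (x, w) - w + k| := by
      intro k
      exact ((((hg.comp measurable_prodMk_left).sub measurable_id).add_const k).abs).ennreal_ofReal
    -- translation step for each of the four
    have key : ∀ s aa : ℝ, (s = 1 ∨ s = -1) → (aa = a ∨ aa = 1 - a) →
        (∫⁻ w in Ioo (1 - M) (M - 1),
           ENNReal.ofReal |g (x, w) - w + s * (|x - aa| - c)| ∂volume) ≤
        ∫⁻ b in Ioo (-M) M, ENNReal.ofReal |g (x, s * |x - aa| + b) - (s * c + b)| ∂volume := by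
      intro s aa hs haa
      have haa0 : 0 ≤ aa := by rcases haa with rfl | rfl <;> linarith
      have haa1 : aa ≤ 1 := by rcases haa with rfl | rfl <;> linarith
      have hd1 : |x - aa| ≤ 1 := abs_le.mpr ⟨by linarith [hxm.1], by linarith [hxm.2]⟩
      have hd0 : 0 ≤ |x - aa| := abs_nonneg _
      have hsb : -1 ≤ s * |x - aa| ∧ s * |x - aa| ≤ 1 := by
        rcases hs with rfl | rfl
        · constructor <;> [linarith; linarith]
        · constructor <;> [nlinarith; nlinarith]
      have hsub : Ioo (1 - M) (M - 1) ⊆ Ioo (s * |x - aa| - M) (s * |x - aa| + M) := by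
        intro w hw
        rw [mem_Ioo] at hw ⊢
        exact ⟨by linarith [hw.1, hsb.1], by linarith [hw.2, hsb.2]⟩
      have hcong : ∀ b : ℝ, ENNReal.ofReal |g (x, s * |x - aa| + b) - (s * c + b)|
          = (fun w => ENNReal.ofReal |g (x, w) - w + s * (|x - aa| - c)|) (s * |x - aa| + b) := by
        intro b
        simp only []
        congr 1
        congr 1
        ring
      calc ∫⁻ w in Ioo (1 - M) (M - 1),
             ENNReal.ofReal |g (x, w) - w + s * (|x - aa| - c)| ∂volume
          ≤ ∫⁻ w in Ioo (s * |x - aa| - M) (s * |x - aa| + M),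
             ENNReal.ofReal |g (x, w) - w + s * (|x - aa| - c)| ∂volume := by
            exact lintegral_mono' (Measure.restrict_mono hsub le_rfl) (le_refl _)
        _ = ∫⁻ b in Ioo (-M) M,
             (fun w => ENNReal.ofReal |g (x, w) - w + s * (|x - aa| - c)|)
               (s * |x - aa| + b) ∂volume :=
            (lintegral_Ioo_translate _ (s * |x - aa|) M).symm
        _ = ∫⁻ b in Ioo (-M) M,
             ENNReal.ofReal |g (x, s * |x - aa| + b) - (s * c + b)| ∂volume := by
            exact lintegral_congr fun b => (hcong b).symm
    -- pointwise key inequality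
    have hpt : ∀ w : ℝ, ENNReal.ofReal (2*c) ≤
        ENNReal.ofReal |g (x, w) - w + 1 * (|x - a| - c)|
        + ENNReal.ofReal |g (x, w) - w + (-1) * (|x - a| - c)|
        + (ENNReal.ofReal |g (x, w) - w + 1 * (|x - (1-a)| - c)|
           + ENNReal.ofReal |g (x, w) - w + (-1) * (|x - (1-a)| - c)|) := by
      intro w
      have hu : x - (1 - a) = x - a - c := by rw [hgap]; ring
      have hk := key_ineq c (x - a) (g (x, w) - w) hc0
      have hreal : 2*c ≤ |g (x, w) - w + 1 * (|x - a| - c)|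
          + |g (x, w) - w + (-1) * (|x - a| - c)|
          + (|g (x, w) - w + 1 * (|x - (1-a)| - c)|
             + |g (x, w) - w + (-1) * (|x - (1-a)| - c)|) := by
        rw [hu]
        simp only [one_mul, neg_one_mul, ← sub_eq_add_neg]
        exact hk
      calc ENNReal.ofReal (2*c)
          ≤ ENNReal.ofReal (|g (x, w) - w + 1 * (|x - a| - c)|
            + |g (x, w) - w + (-1) * (|x - a| - c)|
            + (|g (x, w) - w + 1 * (|x - (1-a)| - c)|
               + |g (x, w) - w + (-1) * (|x - (1-a)| - c)|)) :=
            ENNReal.ofReal_le_ofReal hreal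
        _ = _ := by
            rw [ENNReal.ofReal_add (by positivity) (by positivity),
              ENNReal.ofReal_add (abs_nonneg _) (abs_nonneg _),
              ENNReal.ofReal_add (abs_nonneg _) (abs_nonneg _)]
    -- combine
    have hvol : (volume (Ioo (1 - M) (M - 1)) : ℝ≥0∞) = ENNReal.ofReal (2*(M-1)) := by
      rw [Real.volume_Ioo]
      congr 1
      ring
    have hsum : ENNReal.ofReal (2*c) * ENNReal.ofReal (2*(M-1)) ≤
        ∫⁻ w in Ioo (1 - M) (M - 1),
          (ENNReal.ofReal |g (x, w) - w + 1 * (|x - a| - c)|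
          + ENNReal.ofReal |g (x, w) - w + (-1) * (|x - a| - c)|
          + (ENNReal.ofReal |g (x, w) - w + 1 * (|x - (1-a)| - c)|
             + ENNReal.ofReal |g (x, w) - w + (-1) * (|x - (1-a)| - c)|)) ∂volume := by
      have h1 : ∫⁻ _w in Ioo (1 - M) (M - 1), ENNReal.ofReal (2*c) ∂volume
          = ENNReal.ofReal (2*c) * ENNReal.ofReal (2*(M-1)) := by
        rw [setLIntegral_const, hvol]
      rw [← h1]
      exact lintegral_mono fun w => hpt w
    have hsplit : ∫⁻ w in Ioo (1 - M) (M - 1),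
          (ENNReal.ofReal |g (x, w) - w + 1 * (|x - a| - c)|
          + ENNReal.ofReal |g (x, w) - w + (-1) * (|x - a| - c)|
          + (ENNReal.ofReal |g (x, w) - w + 1 * (|x - (1-a)| - c)|
             + ENNReal.ofReal |g (x, w) - w + (-1) * (|x - (1-a)| - c)|)) ∂volume
        = (∫⁻ w in Ioo (1 - M) (M - 1), ENNReal.ofReal |g (x, w) - w + 1 * (|x - a| - c)| ∂volume)
        + (∫⁻ w in Ioo (1 - M) (M - 1), ENNReal.ofReal |g (x, w) - w + (-1) * (|x - a| - c)| ∂volume)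
        + ((∫⁻ w in Ioo (1 - M) (M - 1), ENNReal.ofReal |g (x, w) - w + 1 * (|x - (1-a)| - c)| ∂volume)
          + (∫⁻ w in Ioo (1 - M) (M - 1), ENNReal.ofReal |g (x, w) - w + (-1) * (|x - (1-a)| - c)| ∂volume)) := by
      rw [lintegral_add_left (f := fun w => ENNReal.ofReal |g (x, w) - w + 1 * (|x - a| - c)|
            + ENNReal.ofReal |g (x, w) - w + (-1) * (|x - a| - c)|) ((hFm _).add (hFm _)),
        lintegral_add_left (hFm _), lintegral_add_left (hFm _)]
    calc ENNReal.ofReal (2*c) * ENNReal.ofReal (2*(M-1))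
        ≤ _ := hsum
      _ = _ := hsplit
      _ ≤ _ := by
          refine add_le_add (add_le_add ?_ ?_) (add_le_add ?_ ?_)
          · exact key 1 a (Or.inl rfl) (Or.inl rfl)
          · exact key (-1) a (Or.inr rfl) (Or.inl rfl)
          · exact key 1 (1-a) (Or.inl rfl) (Or.inr rfl)
          · exact key (-1) (1-a) (Or.inr rfl) (Or.inr rfl)
  -- integrate the inner bound over x
  have hglobal : ENNReal.ofReal (2*c) * ENNReal.ofReal (2*(M-1)) ≤
      4 * (ENNReal.ofReal (1 - Real.sqrt 3 / 2 - ε) * ENNReal.ofReal (2*M)) := by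
    have hK : ENNReal.ofReal (2*c) * ENNReal.ofReal (2*(M-1))
        = ∫⁻ _x in Set.Icc (0:ℝ) 1,
            ENNReal.ofReal (2*c) * ENNReal.ofReal (2*(M-1)) ∂μ := by
      rw [setLIntegral_const, hμ, mul_one]
    have hmono := lintegral_mono_ae (μ := μ.restrict (Set.Icc (0:ℝ) 1))
      ((ae_restrict_mem measurableSet_Icc).mono fun x hx => hinner x hx)
    have hsplitx : ∫⁻ x in Set.Icc (0:ℝ) 1,
        ((∫⁻ b in Ioo (-M) M, ENNReal.ofReal |g (x, 1 * |x - a| + b) - (1 * c + b)| ∂volume) +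
        (∫⁻ b in Ioo (-M) M, ENNReal.ofReal |g (x, (-1) * |x - a| + b) - ((-1) * c + b)| ∂volume) +
        ((∫⁻ b in Ioo (-M) M, ENNReal.ofReal |g (x, 1 * |x - (1-a)| + b) - (1 * c + b)| ∂volume) +
        (∫⁻ b in Ioo (-M) M, ENNReal.ofReal |g (x, (-1) * |x - (1-a)| + b) - ((-1) * c + b)| ∂volume))) ∂μ
        = (∫⁻ x in Set.Icc (0:ℝ) 1, ∫⁻ b in Ioo (-M) M, ENNReal.ofReal |g (x, 1 * |x - a| + b) - (1 * c + b)| ∂volume ∂μ)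
        + (∫⁻ x in Set.Icc (0:ℝ) 1, ∫⁻ b in Ioo (-M) M, ENNReal.ofReal |g (x, (-1) * |x - a| + b) - ((-1) * c + b)| ∂volume ∂μ)
        + ((∫⁻ x in Set.Icc (0:ℝ) 1, ∫⁻ b in Ioo (-M) M, ENNReal.ofReal |g (x, 1 * |x - (1-a)| + b) - (1 * c + b)| ∂volume ∂μ)
        + (∫⁻ x in Set.Icc (0:ℝ) 1, ∫⁻ b in Ioo (-M) M, ENNReal.ofReal |g (x, (-1) * |x - (1-a)| + b) - ((-1) * c + b)| ∂volume ∂μ)) := by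
      rw [lintegral_add_left (f := fun x => (∫⁻ b in Ioo (-M) M, ENNReal.ofReal |g (x, 1 * |x - a| + b) - (1 * c + b)| ∂volume) +
          (∫⁻ b in Ioo (-M) M, ENNReal.ofReal |g (x, (-1) * |x - a| + b) - ((-1) * c + b)| ∂volume)) ((hIm 1 a).add (hIm (-1) a)),
        lintegral_add_left (hIm 1 a), lintegral_add_left (hIm 1 (1-a))]
    have hT : ∀ s aa : ℝ, (s = 1 ∨ s = -1) → (aa = a ∨ aa = 1 - a) →
        (∫⁻ x in Set.Icc (0:ℝ) 1, ∫⁻ b in Ioo (-M) M,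
          ENNReal.ofReal |g (x, s * |x - aa| + b) - (s * c + b)| ∂volume ∂μ)
        ≤ ENNReal.ofReal (1 - Real.sqrt 3 / 2 - ε) * ENNReal.ofReal (2*M) := by
      intro s aa hs haa
      rw [hswap s aa]
      calc ∫⁻ b in Ioo (-M) M, (∫⁻ x in Set.Icc (0:ℝ) 1,
            ENNReal.ofReal |g (x, s * |x - aa| + b) - (s * c + b)| ∂μ) ∂volume
          ≤ ∫⁻ _b in Ioo (-M) M, ENNReal.ofReal (1 - Real.sqrt 3 / 2 - ε) ∂volume :=
            lintegral_mono fun b => herr s aa b hs haa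
        _ = ENNReal.ofReal (1 - Real.sqrt 3 / 2 - ε) * volume (Ioo (-M) M) :=
            setLIntegral_const _ _
        _ = ENNReal.ofReal (1 - Real.sqrt 3 / 2 - ε) * ENNReal.ofReal (2*M) := by
            rw [Real.volume_Ioo]
            congr 1
            ring
    calc ENNReal.ofReal (2*c) * ENNReal.ofReal (2*(M-1))
        = _ := hK
      _ ≤ _ := hmono
      _ = _ := hsplitx
      _ ≤ ENNReal.ofReal (1 - Real.sqrt 3 / 2 - ε) * ENNReal.ofReal (2*M)
          + ENNReal.ofReal (1 - Real.sqrt 3 / 2 - ε) * ENNReal.ofReal (2*M)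
          + (ENNReal.ofReal (1 - Real.sqrt 3 / 2 - ε) * ENNReal.ofReal (2*M)
          + ENNReal.ofReal (1 - Real.sqrt 3 / 2 - ε) * ENNReal.ofReal (2*M)) := by
          refine add_le_add (add_le_add ?_ ?_) (add_le_add ?_ ?_)
          · exact hT 1 a (Or.inl rfl) (Or.inl rfl)
          · exact hT (-1) a (Or.inr rfl) (Or.inl rfl)
          · exact hT 1 (1-a) (Or.inl rfl) (Or.inr rfl)
          · exact hT (-1) (1-a) (Or.inr rfl) (Or.inr rfl)
      _ = 4 * (ENNReal.ofReal (1 - Real.sqrt 3 / 2 - ε) * ENNReal.ofReal (2*M)) := by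
          generalize (ENNReal.ofReal (1 - Real.sqrt 3 / 2 - ε) * ENNReal.ofReal (2*M)) = t
          ring
  -- derive the numeric contradiction
  have hMnn : (0:ℝ) ≤ 2*M := by linarith
  have hL : ENNReal.ofReal (2*c) * ENNReal.ofReal (2*(M-1))
      = ENNReal.ofReal (2*c*(2*(M-1))) := by
    rw [← ENNReal.ofReal_mul (by positivity)]
  have hR : (4:ℝ≥0∞) * (ENNReal.ofReal (1 - Real.sqrt 3 / 2 - ε) * ENNReal.ofReal (2*M))
      = ENNReal.ofReal (4 * ((1 - Real.sqrt 3 / 2 - ε) * (2*M))) := by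
    rw [← ENNReal.ofReal_mul (le_of_lt hpos),
      show (4:ℝ≥0∞) = ENNReal.ofReal 4 by norm_num,
      ← ENNReal.ofReal_mul (by norm_num)]
  rw [hL, hR] at hglobal
  have hreal : 2*c*(2*(M-1)) ≤ 4 * ((1 - Real.sqrt 3 / 2 - ε) * (2*M)) := by
    have h4 : (0:ℝ) ≤ 4 * ((1 - Real.sqrt 3 / 2 - ε) * (2*M)) := by
      have := le_of_lt hpos
      positivity
    exact (ENNReal.ofReal_le_ofReal_iff h4).mp hglobal
  rw [hc2] at hreal
  have hMε : M * ε = ε + 1 := by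
    rw [hM_def]
    field_simp
  clear_value a c M
  have h8 : 8 * (M * ε) ≤ 4 * c := by nlinarith [hreal]
  rw [hMε] at h8
  linarith [hc1, hε]
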